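/- Every LC-loop has the left inverse property: if a loop satisfies (x·x)·(y·z) = (x·(x·y))·z for all x,y,z, then (e/x)·(x·y) = y for all x,y, where e is the identity. -/
import Mathlib


/-- A loop: a set with multiplication, left division `ldiv` (written `\`),
right division `rdiv` (written `/`), and a two-sided identity `e`. -/
structure Loop (α : Type) where
  mul : α → α → α
  ldiv : α → α → α
  rdiv : α → α → α
  e : α
  mul_ldiv : ∀ a b, mul a (ldiv a b) = b
  rdiv_mul : ∀ a b, mul (rdiv b a) a = b
  ldiv_mul : ∀ a b, ldiv a (mul a b) = b
  mul_rdiv : ∀ a b, rdiv (mul b a) a = b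
  e_mul : ∀ a, mul e a = a
  mul_e : ∀ a, mul a e = a

theorem stmt_7 (α : Type) (L : Loop α) (h : ∀ x y z : α, L.mul (L.mul x x) (L.mul y z) = L.mul (L.mul x (L.mul x y)) z) :
    ∀ x y : α, L.mul (L.rdiv L.e x) (L.mul x y) = y := by
  intro x y
  -- left alternativity: (xx)y = x(xy)
  have la : ∀ a b : α, L.mul (L.mul a a) b = L.mul a (L.mul a b) := by
    intro a b
    have := h a b L.e
    rwa [L.mul_e, L.mul_e] at this
  -- key: (x\e)·z = (xx)\(x·z)
  have key : ∀ z : α, L.mul (L.ldiv x L.e) z = L.ldiv (L.mul x x) (L.mul x z) := by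
    intro z
    have h1 := h x (L.ldiv x L.e) z
    rw [L.mul_ldiv, L.mul_e] at h1
    have := congrArg (L.ldiv (L.mul x x)) h1
    rwa [L.ldiv_mul] at this
  -- e/x = x\e
  have inv : L.rdiv L.e x = L.ldiv x L.e := by
    have h2 := key x
    have h3 : L.ldiv (L.mul x x) (L.mul x x) = L.e := by
      have := L.ldiv_mul (L.mul x x) L.e
      rwa [L.mul_e] at this
    rw [h3] at h2
    have := L.mul_rdiv x (L.ldiv x L.e)
    rw [h2] at this
    exact this
  rw [inv, key (L.mul x y), ← la, L.ldiv_mul]
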